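/- Let n ≥ 2, k ≥ 1. For i ∈ Fin n and a strategy profile x : Fin n → Fin k, let d_i(x) : Fin (n−1) → Fin k denote x with its i-th coordinate deleted (d_i(x) = x ∘ Fin.succAbove i). For each orbit O of the action of S_{n−1} on profiles Fin (n−1) → Fin k and each strategy s ∈ Fin k, define the tuple c^{O,s} = (c^{O,s}_1, ..., c^{O,s}_n) of payoff functions by c^{O,s}_i(x) = 1 if d_i(x) ∈ O and x(i) = s, and c^{O,s}_i(x) = 0 otherwise. Then every c^{O,s} is a symmetric game, and the family {c^{O,s} : O an S_{n−1}-orbit, s ∈ Fin k} is a basis of the symmetric game subspace 𝒮_{[n;k]}. -/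

import Mathlib

/-- The symmetric game subspace 𝒮_{[n;k]}: the subspace of all tuples of payoff
functions c_i : (Fin n → Fin k) → ℝ with c_i(x) = c_{σ(i)}(x ∘ σ⁻¹) for every
permutation σ, every player i and every strategy profile x. -/
def symGameSubspace (n k : ℕ) : Submodule ℝ (Fin n → (Fin n → Fin k) → ℝ) where
  carrier := { c | ∀ (σ : Equiv.Perm (Fin n)) (i : Fin n) (x : Fin n → Fin k),
    c i x = c (σ i) (fun j => x (σ⁻¹ j)) }
  add_mem' := by
    intro c d hc hd σ i x
    simp only [Pi.add_apply, hc σ i x, hd σ i x]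
  zero_mem' := by intro σ i x; rfl
  smul_mem' := by
    intro a c hc σ i x
    simp only [Pi.smul_apply, hc σ i x]

/-- Two profiles are equivalent iff they lie in the same orbit of the action of S_m,
where σ acts by p ↦ p ∘ σ. -/
def orbitSetoid (m k : ℕ) : Setoid (Fin m → Fin k) where
  r p q := ∃ σ : Equiv.Perm (Fin m), q = p ∘ σ
  iseqv :=
    { refl := fun p => ⟨1, rfl⟩
      symm := by
        rintro p q ⟨σ, rfl⟩
        exact ⟨σ⁻¹, by funext j; simp⟩
      trans := by
        rintro p q r ⟨σ, rfl⟩ ⟨τ, rfl⟩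
        exact ⟨σ * τ, rfl⟩ }

open Classical in
/-- The symmetric game c^{O,s} for an S_{n−1}-orbit O of reduced profiles and a
strategy s : its i-th payoff function takes value 1 at a profile x iff the deleted
profile d_i(x) = x ∘ Fin.succAbove i lies in O and x(i) = s, and 0 otherwise.
(Here n = m + 1.) -/
noncomputable def basisGame (m k : ℕ) (O : Quotient (orbitSetoid m k)) (s : Fin k) :
    Fin (m + 1) → (Fin (m + 1) → Fin k) → ℝ :=
  fun i x =>
    if Quotient.mk (orbitSetoid m k) (x ∘ Fin.succAbove i) = O ∧ x i = s then 1 else 0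

/-- for n = m+1 ≥ 2 and k ≥ 1, every c^{O,s} is a symmetric game, and the
family {c^{O,s}} indexed by the S_{n−1}-orbits O and the strategies s ∈ Fin k is a basis
of the symmetric game subspace 𝒮_{[n;k]}: it is linearly independent and spans it. -/
-- AUX: two injections into Fin (m+1) missing the same point differ by a permutation
lemma exists_perm_comp {m : ℕ} {f g : Fin m → Fin (m + 1)}
    (hf : Function.Injective f) (hg : Function.Injective g) {a : Fin (m + 1)}
    (haf : ∀ j, f j ≠ a) (hag : ∀ j, g j ≠ a) :
    ∃ τ : Equiv.Perm (Fin m), g = f ∘ τ := by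
  have hcard : Fintype.card {b : Fin (m + 1) // b ≠ a} = m := by
    rw [Fintype.card_congr (finSuccAboveEquiv a).symm, Fintype.card_fin]
  let f' : Fin m → {b : Fin (m + 1) // b ≠ a} := fun j => ⟨f j, haf j⟩
  let g' : Fin m → {b : Fin (m + 1) // b ≠ a} := fun j => ⟨g j, hag j⟩
  have hf' : Function.Bijective f' := by
    rw [Fintype.bijective_iff_injective_and_card]
    exact ⟨fun x y h => hf (congrArg Subtype.val h), by simp [hcard]⟩
  have hg' : Function.Bijective g' := by
    rw [Fintype.bijective_iff_injective_and_card]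
    exact ⟨fun x y h => hg (congrArg Subtype.val h), by simp [hcard]⟩
  let ef := Equiv.ofBijective f' hf'
  let eg := Equiv.ofBijective g' hg'
  refine ⟨eg.trans ef.symm, funext fun j => ?_⟩
  have : f' (ef.symm (eg j)) = eg j := ef.apply_symm_apply (eg j)
  simpa [f', g', eg] using (congrArg Subtype.val this).symm

lemma orbit_eq_of_missing {m k : ℕ} (x : Fin (m + 1) → Fin k) {f g : Fin m → Fin (m + 1)}
    (hf : Function.Injective f) (hg : Function.Injective g) {a : Fin (m + 1)}
    (haf : ∀ j, f j ≠ a) (hag : ∀ j, g j ≠ a) :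
    Quotient.mk (orbitSetoid m k) (x ∘ f) = Quotient.mk (orbitSetoid m k) (x ∘ g) := by
  obtain ⟨τ, hτ⟩ := exists_perm_comp hf hg haf hag
  exact Quotient.sound ⟨τ, by rw [hτ]; rfl⟩

/-- extend a permutation of Fin m to Fin (m+1) fixing 0 -/
def extPerm {m : ℕ} (τ : Equiv.Perm (Fin m)) : Equiv.Perm (Fin (m + 1)) where
  toFun := Fin.cases 0 (fun l => (τ l).succ)
  invFun := Fin.cases 0 (fun l => (τ⁻¹ l).succ)
  left_inv := by intro j; cases j using Fin.cases <;> simp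
  right_inv := by intro j; cases j using Fin.cases <;> simp

@[simp] lemma extPerm_zero {m : ℕ} (τ : Equiv.Perm (Fin m)) : extPerm τ 0 = 0 := rfl
@[simp] lemma extPerm_succ {m : ℕ} (τ : Equiv.Perm (Fin m)) (l : Fin m) :
    extPerm τ l.succ = (τ l).succ := rfl
@[simp] lemma extPerm_inv_zero {m : ℕ} (τ : Equiv.Perm (Fin m)) : (extPerm τ)⁻¹ 0 = 0 := rfl
@[simp] lemma extPerm_inv_succ {m : ℕ} (τ : Equiv.Perm (Fin m)) (l : Fin m) :
    (extPerm τ)⁻¹ l.succ = (τ⁻¹ l).succ := rfl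


lemma mem_symGame (m k : ℕ) (O : Quotient (orbitSetoid m k)) (s : Fin k) :
    basisGame m k O s ∈ symGameSubspace (m + 1) k := by
  classical
  intro σ i x
  have h2 : (fun j => x (σ⁻¹ j)) (σ i) = x i := by simp
  have h1 : Quotient.mk (orbitSetoid m k) ((fun j => x (σ⁻¹ j)) ∘ Fin.succAbove (σ i))
      = Quotient.mk (orbitSetoid m k) (x ∘ Fin.succAbove i) := by
    have : (fun j => x (σ⁻¹ j)) ∘ Fin.succAbove (σ i)
        = x ∘ (fun l => σ⁻¹ (Fin.succAbove (σ i) l)) := rfl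
    rw [this]
    refine orbit_eq_of_missing x (f := fun l => σ⁻¹ (Fin.succAbove (σ i) l))
      (g := Fin.succAbove i) ?_ (Fin.succAbove_right_injective) (a := i) ?_
      (fun j => Fin.succAbove_ne i j)
    · exact fun a b h => Fin.succAbove_right_injective (σ⁻¹.injective h)
    · intro j h
      exact Fin.succAbove_ne (σ i) j (by simpa using congrArg σ h)
  simp only [basisGame]
  rw [h1]
  exact if_congr (and_congr_right fun _ => by simp) rfl rfl

/-- key symmetry invariance: symmetric payoffs at player 0 only depend on own strategy
and the orbit of the deleted profile -/
lemma symInvariant {m k : ℕ} {c : Fin (m + 1) → (Fin (m + 1) → Fin k) → ℝ}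
    (hc : c ∈ symGameSubspace (m + 1) k) (y y' : Fin (m + 1) → Fin k)
    (h0 : y 0 = y' 0) (τ : Equiv.Perm (Fin m)) (hτ : y' ∘ Fin.succ = y ∘ Fin.succ ∘ τ) :
    c 0 y = c 0 y' := by
  have := hc (extPerm τ) 0 y'
  rw [extPerm_zero] at this
  rw [this]
  congr 1
  funext j
  cases j using Fin.cases with
  | zero => simpa using h0
  | succ l =>
    have h := congrFun hτ (τ⁻¹ l)
    simp only [Function.comp_apply] at h
    simp only [extPerm_inv_succ, h]
    simp


theorem basisGame_basis (m k : ℕ) (hm : 1 ≤ m) (hk : 1 ≤ k) :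
    (∀ (O : Quotient (orbitSetoid m k)) (s : Fin k),
        basisGame m k O s ∈ symGameSubspace (m + 1) k) ∧
    LinearIndependent ℝ
      (fun z : Quotient (orbitSetoid m k) × Fin k => basisGame m k z.1 z.2) ∧
    Submodule.span ℝ
        (Set.range (fun z : Quotient (orbitSetoid m k) × Fin k => basisGame m k z.1 z.2))
      = symGameSubspace (m + 1) k := by
  classical
  refine ⟨mem_symGame m k, ?_, ?_⟩
  · rw [linearIndependent_iff']
    intro t g hsum z hz
    obtain ⟨O, s⟩ := z
    obtain ⟨p, hp⟩ := Quotient.exists_rep O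
    set x : Fin (m + 1) → Fin k := Fin.cons s p with hx
    have hcomp : x ∘ Fin.succAbove 0 = p := by
      funext j; simp [hx, Fin.succAbove_zero]
    have := congrFun (congrFun hsum 0) x
    simp only [Finset.sum_apply, Pi.smul_apply, Pi.zero_apply, smul_eq_mul] at this
    rw [Finset.sum_eq_single (⟨O, s⟩ : Quotient (orbitSetoid m k) × Fin k)] at this
    · have hone : basisGame m k O s 0 x = 1 :=
        if_pos ⟨by rw [hcomp, hp], by rw [hx]; exact Fin.cons_zero _ _⟩
      rw [hone, mul_one] at this
      exact this
    · intro b hb hne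
      have hcond : ¬(Quotient.mk (orbitSetoid m k) (x ∘ Fin.succAbove 0) = b.1 ∧
          x 0 = b.2) := by
        rintro ⟨h1, h2⟩
        apply hne
        rw [Prod.ext_iff]
        constructor
        · rw [← h1, hcomp, hp]
        · rw [← h2, hx, Fin.cons_zero]
      rw [show basisGame m k b.1 b.2 0 x = 0 from if_neg hcond, mul_zero]
    · intro h; exact absurd hz h
  · apply le_antisymm
    · rw [Submodule.span_le]
      rintro _ ⟨z, rfl⟩
      exact mem_symGame m k z.1 z.2
    · intro c hc
      haveI : Fintype (Quotient (orbitSetoid m k)) := Fintype.ofFinite _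
      have hrepr : c = ∑ z : Quotient (orbitSetoid m k) × Fin k,
          (c 0 (Fin.cons z.2 z.1.out)) • basisGame m k z.1 z.2 := by
        funext i x
        -- reduce c i x to player 0
        have step1 : c i x = c 0 (fun j => x (Equiv.swap i 0 j)) := by
          have := hc (Equiv.swap i 0) i x
          simpa [Equiv.swap_apply_left] using this
        set y : Fin (m + 1) → Fin k := fun j => x (Equiv.swap i 0 j) with hy
        set O : Quotient (orbitSetoid m k) := Quotient.mk _ (x ∘ Fin.succAbove i) with hO
        have hyorb : Quotient.mk (orbitSetoid m k) (y ∘ Fin.succ) = O := by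
          rw [hO]
          have : y ∘ Fin.succ = x ∘ (fun l => Equiv.swap i 0 l.succ) := rfl
          rw [this]
          refine orbit_eq_of_missing x (f := fun l => Equiv.swap i 0 l.succ)
            (g := Fin.succAbove i)
            (fun a b h => Fin.succ_injective _ ((Equiv.swap i 0).injective h))
            Fin.succAbove_right_injective (a := i) ?_ (fun j => Fin.succAbove_ne i j)
          intro j h
          have : (j.succ : Fin (m + 1)) = Equiv.swap i 0 i := by
            simpa using congrArg (Equiv.swap i 0) h
          rw [Equiv.swap_apply_left] at this
          exact Fin.succ_ne_zero j this
        have hOy : Quotient.mk (orbitSetoid m k) (O.out) =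
            Quotient.mk (orbitSetoid m k) (y ∘ Fin.succ) := by
          rw [hyorb, Quotient.out_eq]
        obtain ⟨τ, hτ⟩ : (orbitSetoid m k).r (y ∘ Fin.succ) O.out :=
          Quotient.exact hOy.symm
        have step2 : c 0 y = c 0 (Fin.cons (x i) O.out) := by
          refine symInvariant hc y (Fin.cons (x i) O.out) ?_ τ ?_
          · simp [hy, Equiv.swap_apply_right]
          · funext l
            simp only [Function.comp_apply, Fin.cons_succ]
            exact congrFun hτ l
        -- evaluate the sum
        have hsum : (∑ z : Quotient (orbitSetoid m k) × Fin k,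
            (c 0 (Fin.cons z.2 z.1.out)) • basisGame m k z.1 z.2) i x
            = c 0 (Fin.cons (x i) O.out) := by
          simp only [Finset.sum_apply, Pi.smul_apply, smul_eq_mul]
          rw [Finset.sum_eq_single (⟨O, x i⟩ : Quotient (orbitSetoid m k) × Fin k)]
          · rw [show basisGame m k O (x i) i x = 1 from if_pos ⟨hO.symm, rfl⟩, mul_one]
          · intro b _ hne
            have hcond : ¬(Quotient.mk (orbitSetoid m k) (x ∘ Fin.succAbove i) = b.1 ∧
                x i = b.2) := by
              rintro ⟨h1, h2⟩
              apply hne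
              rw [Prod.ext_iff]
              exact ⟨by rw [← h1, hO], h2.symm⟩
            rw [show basisGame m k b.1 b.2 i x = 0 from if_neg hcond, mul_zero]
          · intro h; exact absurd (Finset.mem_univ _) h
        rw [hsum, step1, step2]
      rw [hrepr]
      exact Submodule.sum_mem _ fun z _ =>
        Submodule.smul_mem _ _ (Submodule.subset_span ⟨z, rfl⟩)
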